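/- (Corollary 1, boundedness; case f = 0.) Set h̃_τ := [‖u(0)‖ + ∫_0^τ α(ξ)·ν(ξ)·‖u(ξ−τ)‖^p dξ]/ν(τ) and assume h̃_τ > 0. Assume the improper integral I := ∫_τ^∞ α(ξ)·σ(ξ)^p·ν(ξ)^{1−p} dξ converges, (h̃_τ·ν(τ))^{1−p} > (p−1)·I, and sup_{t ≥ 0} ∫_0^t γ(ξ) dξ < ∞. Then u is bounded on [−τ, ∞), i.e., sup_{t ≥ −τ} ‖u(t)‖ < ∞. -/

import Mathlib

open Real MeasureTheory Set Filter ComplexInnerProductSpace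

/-- `ν(t) = exp(−∫₀ᵗ γ(ξ) dξ)`. -/
noncomputable def nu (γ : ℝ → ℝ) (t : ℝ) : ℝ := Real.exp (-∫ ξ in (0:ℝ)..t, γ ξ)

/-- `σ(t) = exp(−∫_{t−τ}^t γ(ξ) dξ)`. -/
noncomputable def sig (γ : ℝ → ℝ) (τ t : ℝ) : ℝ :=
  Real.exp (-∫ ξ in (t - τ)..t, γ ξ)

lemma comparison_aux
    {H : Type*} [NormedAddCommGroup H] [InnerProductSpace ℂ H]
    (τ p : ℝ) (hτ : 0 < τ) (hp : 1 < p)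
    (γ α : ℝ → ℝ)
    (hγc : Continuous γ)
    (hα : ∀ t, 0 ≤ α t)
    (u : ℝ → H) (u' : ℝ → H)
    (huc : ContinuousOn u (Ici (-τ)))
    (hud : ∀ t, 0 ≤ t → HasDerivWithinAt u (u' t) (Ici (0:ℝ)) t)
    (hnd : ∀ t, 0 ≤ t → DifferentiableWithinAt ℝ (fun s => ‖u s‖) (Ici (0:ℝ)) t)
    (huineq : ∀ t, 0 ≤ t → (⟪u t, u' t⟫).re ≤
      γ t * ‖u t‖ ^ 2 + α t * ‖u t‖ * ‖u (t - τ)‖ ^ p)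
    (h h' : ℝ → ℝ)
    (hh0 : ∀ t, -τ ≤ t → 0 ≤ h t)
    (hhc : ContinuousOn h (Ici (-τ)))
    (hhd : ∀ t, 0 ≤ t → HasDerivWithinAt h (h' t) (Ici (0:ℝ)) t)
    (hheq : ∀ t, 0 ≤ t → h' t = γ t * h t + α t * h (t - τ) ^ p)
    (hinit : ∀ t, -τ ≤ t → t ≤ 0 → h t = ‖u t‖) :
    ∀ t, -τ ≤ t → ‖u t‖ ≤ h t := by
  set φ : ℝ → ℝ := fun s => ‖u s‖ with hφdef
  set D : ℝ → ℝ := fun t => derivWithin φ (Ici (0:ℝ)) t with hDdef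
  have hDd : ∀ t, 0 ≤ t → HasDerivWithinAt φ (D t) (Ici (0:ℝ)) t :=
    fun t ht => (hnd t ht).hasDerivWithinAt
  -- key identity: φ t * D t = re ⟪u t, u' t⟫
  have key : ∀ t, 0 ≤ t → φ t * D t = (⟪u t, u' t⟫).re := by
    intro t ht
    have hu1 : UniqueDiffWithinAt ℝ (Ici (0:ℝ)) t := uniqueDiffOn_Ici 0 t ht
    have hd1 : HasDerivWithinAt (fun s => φ s ^ 2) (2 * φ t ^ 1 * D t) (Ici (0:ℝ)) t :=
      (hDd t ht).pow 2
    have hd2' : HasDerivWithinAt (fun s => ⟪u s, u s⟫)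
        (⟪u t, u' t⟫ + ⟪u' t, u t⟫) (Ici (0:ℝ)) t :=
      HasDerivWithinAt.inner ℂ (hud t ht) (hud t ht)
    have hd2 : HasDerivWithinAt (fun s => (⟪u s, u s⟫).re)
        ((⟪u t, u' t⟫ + ⟪u' t, u t⟫).re) (Ici (0:ℝ)) t :=
      (Complex.reCLM.hasFDerivAt.comp_hasDerivWithinAt t hd2')
    have heqfun : (fun s => (⟪u s, u s⟫).re) = fun s => φ s ^ 2 := by
      funext s
      simpa using inner_self_eq_norm_sq (𝕜 := ℂ) (u s)
    rw [heqfun] at hd2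
    have := hd1.derivWithin hu1
    rw [hd2.derivWithin hu1] at this
    have hre : (⟪u t, u' t⟫ + ⟪u' t, u t⟫).re = 2 * (⟪u t, u' t⟫).re := by
      have hconj : (⟪u' t, u t⟫ : ℂ) = starRingEnd ℂ ⟪u t, u' t⟫ :=
        (inner_conj_symm _ _).symm
      rw [hconj, Complex.add_re, Complex.conj_re]
      ring
    rw [hre] at this
    nlinarith [this]
  have keyineq : ∀ t, 0 ≤ t → 0 < φ t →
      D t ≤ γ t * φ t + α t * ‖u (t - τ)‖ ^ p := by
    intro t ht hφ
    have h1 := huineq t ht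
    rw [← key t ht] at h1
    have h2 : φ t * D t ≤ φ t * (γ t * φ t + α t * ‖u (t - τ)‖ ^ p) := by
      calc φ t * D t ≤ γ t * ‖u t‖ ^ 2 + α t * ‖u t‖ * ‖u (t-τ)‖ ^ p := h1
      _ = φ t * (γ t * φ t + α t * ‖u (t - τ)‖ ^ p) := by simp [hφdef]; ring
    exact le_of_mul_le_mul_left h2 hφ
  -- main induction
  have main : ∀ n : ℕ, ∀ t, -τ ≤ t → t ≤ n * τ → φ t ≤ h t := by
    intro n
    induction n with
    | zero => intro t ht1 ht2
              simp at ht2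
              exact (hinit t ht1 ht2).ge
    | succ n ih =>
      intro t ht1 ht2
      rcases le_or_gt t (n * τ) with hc | hc
      · exact ih t ht1 hc
      set a : ℝ := n * τ with ha
      set b : ℝ := (n + 1 : ℕ) * τ with hb
      have ha0 : (0:ℝ) ≤ a := by positivity
      have hab : a ≤ b := by
        rw [ha, hb]; push_cast; nlinarith
      have hba : b = a + τ := by rw [ha, hb]; push_cast; ring
      -- bound for γ on Icc a b
      obtain ⟨C, hC⟩ := (isCompact_Icc (a := a) (b := b)).exists_bound_of_continuousOn
        hγc.continuousOn
      set K : ℝ := C + 1 with hK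
      have hγK : ∀ x ∈ Icc a b, γ x < K := by
        intro x hx
        have := hC x hx
        rw [Real.norm_eq_abs] at this
        cases abs_le.mp this with
        | intro l r => linarith
      -- for each ε > 0
      have step : ∀ ε : ℝ, 0 < ε → φ t ≤ h t + ε * Real.exp (K * (t - a)) := by
        intro ε hε
        have hIccIci : Icc a b ⊆ Ici (-τ) := fun x hx => le_trans (by linarith) hx.1
        have key2 := image_le_of_deriv_right_lt_deriv_boundary'
          (f := φ) (f' := D) (a := a) (b := b)
          (B := fun x => h x + ε * Real.exp (K * (x - a)))
          (B' := fun x => h' x + ε * (K * Real.exp (K * (x - a))))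
          ((huc.norm).mono hIccIci)
          (fun x hx => ((hDd x (le_trans ha0 hx.1)).mono (Ici_subset_Ici.mpr (le_trans ha0 hx.1))))
          (by -- φ a ≤ B a
            have h1 : φ a ≤ h a := ih a (by linarith) le_rfl
            have h2 : 0 < ε * Real.exp (K * (a - a)) := by positivity
            show φ a ≤ h a + ε * Real.exp (K * (a - a))
            linarith)
          (((hhc.mono hIccIci)).add (by fun_prop))
          (fun x hx => by
            have hx0 : (0:ℝ) ≤ x := le_trans ha0 hx.1
            have hd : HasDerivWithinAt (fun y => ε * Real.exp (K * (y - a)))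
                (ε * (K * Real.exp (K * (x - a)))) (Ici x) x := by
              have h0 : HasDerivAt (fun y : ℝ => K * (y - a)) K x := by
                simpa using ((hasDerivAt_id x).sub_const a).const_mul K
              have h1 := (h0.exp.const_mul ε).hasDerivWithinAt (s := Ici x)
              exact h1.congr_deriv (by ring)
            exact ((hhd x hx0).mono (Ici_subset_Ici.mpr hx0)).add hd)
          (fun x hx heq => by
            have hx0 : (0:ℝ) ≤ x := le_trans ha0 hx.1
            have hE : (0:ℝ) < Real.exp (K * (x - a)) := Real.exp_pos _
            have hφpos : 0 < φ x := by
              have := hh0 x (le_trans (by linarith) hx.1)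
              rw [heq]; positivity
            have h1 := keyineq x hx0 hφpos
            have hxτ1 : -τ ≤ x - τ := by linarith [hx.1]
            have hxτ2 : x - τ ≤ n * τ := by
              have := hx.2; rw [hb] at this; push_cast at this; linarith
            have h2 : ‖u (x - τ)‖ ≤ h (x - τ) := ih (x - τ) hxτ1 hxτ2
            have h3 : ‖u (x - τ)‖ ^ p ≤ h (x - τ) ^ p :=
              Real.rpow_le_rpow (norm_nonneg _) h2 (by linarith)
            have h4 : α x * ‖u (x - τ)‖ ^ p ≤ α x * h (x - τ) ^ p :=
              mul_le_mul_of_nonneg_left h3 (hα x)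
            have h5 : γ x < K := hγK x (Ico_subset_Icc_self hx)
            show D x < h' x + ε * (K * Real.exp (K * (x - a)))
            rw [hheq x hx0]
            calc D x ≤ γ x * φ x + α x * ‖u (x-τ)‖ ^ p := h1
              _ = γ x * (h x + ε * Real.exp (K * (x - a))) + α x * ‖u (x-τ)‖ ^ p := by rw [heq]
              _ < γ x * h x + α x * h (x-τ) ^ p + ε * (K * Real.exp (K * (x - a))) := by
                  nlinarith [mul_pos hε hE])
        have htmem : t ∈ Icc a b := ⟨hc.le, by rw [hb]; exact_mod_cast ht2⟩
        exact key2 htmem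
      -- take ε → 0
      by_contra hcon
      push_neg at hcon
      set E : ℝ := Real.exp (K * (t - a)) with hE
      have hEpos : 0 < E := Real.exp_pos _
      have hlt : 0 < φ t - h t := by linarith
      have hstep := step ((φ t - h t) / (2 * E)) (by positivity)
      have hcalc : (φ t - h t) / (2 * E) * E = (φ t - h t) / 2 := by
        field_simp
      rw [hcalc] at hstep
      linarith
  intro t ht
  obtain ⟨n, hn⟩ := exists_nat_ge (t / τ)
  have : t ≤ n * τ := by
    rw [div_le_iff₀ hτ] at hn
    exact hn
  exact main n t ht this

lemma bound_aux
    (τ p : ℝ) (hτ : 0 < τ) (hp : 1 < p)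
    (γ α : ℝ → ℝ)
    (hγc : Continuous γ) (hαc : Continuous α)
    (hα : ∀ t, 0 ≤ α t)
    (h h' : ℝ → ℝ)
    (hh0 : ∀ t, -τ ≤ t → 0 ≤ h t)
    (hhc : ContinuousOn h (Ici (-τ)))
    (hhd : ∀ t, 0 ≤ t → HasDerivWithinAt h (h' t) (Ici (0:ℝ)) t)
    (hheq : ∀ t, 0 ≤ t → h' t = γ t * h t + α t * h (t - τ) ^ p)
    (hτv : ℝ)
    (hτvdef : hτv = (h 0 + ∫ ξ in (0:ℝ)..τ,
        α ξ * nu γ ξ * h (ξ - τ) ^ p) / nu γ τ)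
    (hτvpos : 0 < hτv)
    (I : ℝ)
    (hint : IntegrableOn (fun ξ => α ξ * sig γ τ ξ ^ p * nu γ ξ ^ (1 - p)) (Ici τ))
    (hI : I = ∫ ξ in Ici τ, α ξ * sig γ τ ξ ^ p * nu γ ξ ^ (1 - p))
    (hcond : (p - 1) * I < (hτv * nu γ τ) ^ (1 - p))
    (hM : BddAbove {x : ℝ | ∃ t, 0 ≤ t ∧ x = ∫ ξ in (0:ℝ)..t, γ ξ}) :
    ∃ B : ℝ, ∀ t, -τ ≤ t → h t ≤ B := by
  set G : ℝ → ℝ := fun s => ∫ ξ in (0:ℝ)..s, γ ξ with hGdef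
  have hGd : ∀ t : ℝ, HasDerivAt G (γ t) t := fun t =>
    intervalIntegral.integral_hasDerivAt_right (hγc.intervalIntegrable _ _)
      (hγc.stronglyMeasurableAtFilter _ _) hγc.continuousAt
  have hGc : Continuous G := continuous_iff_continuousAt.mpr fun t => (hGd t).continuousAt
  have hνeq : ∀ t, nu γ t = Real.exp (-G t) := fun t => rfl
  have hνd : ∀ t, HasDerivAt (nu γ) (-γ t * nu γ t) t := by
    intro t
    have h1 := ((hGd t).neg).exp
    have : HasDerivAt (fun s => Real.exp (-G s)) (-γ t * nu γ t) t := by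
      exact h1.congr_deriv (by rw [hνeq, Pi.neg_apply]; ring)
    exact this
  have hνc : Continuous (nu γ) := by
    have : Continuous fun t => Real.exp (-G t) := Real.continuous_exp.comp (hGc.neg)
    exact this
  have νpos : ∀ t, 0 < nu γ t := fun t => Real.exp_pos _
  set g : ℝ → ℝ := fun t => nu γ t * h t with hgdef
  set g' : ℝ → ℝ := fun t => α t * nu γ t * h (t - τ) ^ p with hg'def
  have hgd : ∀ t, 0 ≤ t → HasDerivWithinAt g (g' t) (Ici (0:ℝ)) t := by
    intro t ht
    have h1 := ((hνd t).hasDerivWithinAt).mul (hhd t ht)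
    exact h1.congr_deriv (by rw [hheq t ht]; simp only [hg'def]; ring)
  have gc : ContinuousOn g (Ici (-τ)) := (hνc.continuousOn).mul hhc
  have gnonneg : ∀ t, -τ ≤ t → 0 ≤ g t := fun t ht =>
    mul_nonneg (νpos t).le (hh0 t ht)
  have g'nonneg : ∀ t, 0 ≤ t → 0 ≤ g' t := by
    intro t ht
    exact mul_nonneg (mul_nonneg (hα t) (νpos t).le)
      (Real.rpow_nonneg (hh0 (t - τ) (by linarith)) p)
  have gmono : MonotoneOn g (Ici (0:ℝ)) := by
    apply monotoneOn_of_hasDerivWithinAt_nonneg (convex_Ici 0)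
      (gc.mono (Ici_subset_Ici.mpr (by linarith))) (f' := g')
    · intro x hx
      rw [interior_Ici] at hx ⊢
      exact (hgd x hx.le).mono Ioi_subset_Ici_self
    · intro x hx
      rw [interior_Ici] at hx
      exact g'nonneg x hx.le
  -- continuity of g' on relevant sets
  have hg'cont : ContinuousOn g' (Ici (-τ + τ)) := by
    apply (hαc.continuousOn.mul hνc.continuousOn).mul
    apply ContinuousOn.rpow_const
    · exact hhc.comp (continuous_id.sub continuous_const).continuousOn
        (fun x hx => by simp at hx ⊢; linarith)
    · intro x _; exact Or.inr (by linarith)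
  have hg'cont0 : ContinuousOn g' (Icc 0 τ) := by
    apply hg'cont.mono; intro x hx; simp at hx ⊢; linarith [hx.1]
  -- g τ via FTC
  have hgτint : ∫ ξ in (0:ℝ)..τ, g' ξ = g τ - g 0 := by
    apply intervalIntegral.integral_eq_sub_of_hasDeriv_right_of_le hτ.le
      (gc.mono (fun x hx => le_trans (by linarith) hx.1))
      (fun x hx => (hgd x hx.1.le).mono (fun y hy => le_trans hx.1.le (le_of_lt hy)))
    rw [intervalIntegrable_iff_integrableOn_Icc_of_le hτ.le]
    exact hg'cont0.integrableOn_compact isCompact_Icc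
  have hg0 : g 0 = h 0 := by
    simp only [hgdef]
    have : nu γ 0 = 1 := by
      rw [hνeq]; simp [hGdef, intervalIntegral.integral_same]
    rw [this, one_mul]
  have gτ_eq : g τ = hτv * nu γ τ := by
    have hne : nu γ τ ≠ 0 := (νpos τ).ne'
    have hgτ2 : intervalIntegral g' 0 τ volume = g τ - g 0 := hgτint
    rw [hτvdef]
    field_simp
    rw [hgτ2, hg0]
    ring
  have gτpos : 0 < g τ := by rw [gτ_eq]; exact mul_pos hτvpos (νpos τ)
  -- J
  set J : ℝ → ℝ := fun ξ => α ξ * sig γ τ ξ ^ p * nu γ ξ ^ (1 - p) with hJdef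
  have hsigeq : ∀ t, sig γ τ t = Real.exp (-(G t - G (t - τ))) := by
    intro t
    unfold sig
    rw [intervalIntegral.integral_interval_sub_left (hγc.intervalIntegrable _ _)
      (hγc.intervalIntegrable _ _)]
  have hsigc : Continuous (sig γ τ) := by
    have : Continuous fun t => Real.exp (-(G t - G (t - τ))) := by
      apply Real.continuous_exp.comp
      exact (hGc.sub (hGc.comp (continuous_id.sub continuous_const))).neg
    exact funext hsigeq ▸ this
  have sigpos : ∀ t, 0 < sig γ τ t := fun t => Real.exp_pos _
  have Jnonneg : ∀ ξ, 0 ≤ J ξ := by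
    intro ξ
    exact mul_nonneg (mul_nonneg (hα ξ) (Real.rpow_nonneg (sigpos ξ).le p))
      (Real.rpow_nonneg (νpos ξ).le _)
  have Jcont : Continuous J := by
    apply (hαc.mul (hsigc.rpow_const fun x => Or.inl (sigpos x).ne')).mul
    exact hνc.rpow_const fun x => Or.inl (νpos x).ne'
  -- key identity
  have idg' : ∀ x, τ ≤ x → g' x = J x * g (x - τ) ^ p := by
    intro x hx
    have hxτ : (0:ℝ) ≤ x - τ := by linarith
    have hgx : g (x - τ) ^ p = nu γ (x - τ) ^ p * h (x - τ) ^ p :=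
      Real.mul_rpow (νpos _).le (hh0 _ (by linarith))
    rw [hgx]
    simp only [hJdef, hg'def]
    have e1 : sig γ τ x ^ p = Real.exp (-(G x - G (x - τ)) * p) := by
      rw [hsigeq, ← Real.exp_mul]
    have e2 : nu γ x ^ (1 - p) = Real.exp (-G x * (1 - p)) := by
      rw [hνeq, ← Real.exp_mul]
    have e3 : nu γ (x - τ) ^ p = Real.exp (-G (x - τ) * p) := by
      rw [hνeq, ← Real.exp_mul]
    have efact : Real.exp (-(G x - G (x - τ)) * p) * Real.exp (-G x * (1 - p)) *
        Real.exp (-G (x - τ) * p) = Real.exp (-G x) := by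
      rw [← Real.exp_add, ← Real.exp_add]
      congr 1
      ring
    rw [e1, e2, e3, hνeq, ← efact]
    ring
  -- primitive of J
  set P : ℝ → ℝ := fun x => ∫ ξ in τ..x, J ξ with hPdef
  have hPd : ∀ x : ℝ, HasDerivAt P (J x) x := fun x =>
    intervalIntegral.integral_hasDerivAt_right (Jcont.intervalIntegrable _ _)
      (Jcont.stronglyMeasurableAtFilter _ _) Jcont.continuousAt
  have hPc : Continuous P := continuous_iff_continuousAt.mpr fun t => (hPd t).continuousAt
  -- W
  set F : ℝ → ℝ := fun x => g x ^ (1 - p) with hFdef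
  set W : ℝ → ℝ := fun x => F x + (p - 1) * P x with hWdef
  have gpos_ge : ∀ x, τ ≤ x → 0 < g x := fun x hx =>
    lt_of_lt_of_le gτpos (gmono (mem_Ici.mpr hτ.le) (mem_Ici.mpr (le_trans hτ.le hx)) hx)
  have Wmono : MonotoneOn W (Ici τ) := by
    apply monotoneOn_of_hasDerivWithinAt_nonneg (convex_Ici τ)
      (f' := fun x => g' x * (1 - p) * g x ^ (1 - p - 1) + (p - 1) * J x)
    · apply ContinuousOn.add
      · exact (gc.mono (t := Ici τ) (fun x hx => le_trans (by linarith : -τ ≤ τ) hx)).rpow_const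
          (fun x hx => Or.inl (gpos_ge x hx).ne')
      · exact (continuous_const.mul hPc).continuousOn
    · intro x hx
      rw [interior_Ici] at hx ⊢
      have hx0 : (0:ℝ) < x := lt_trans hτ hx
      have hgat : HasDerivAt g (g' x) x :=
        (hgd x hx0.le).hasDerivAt (Ici_mem_nhds hx0)
      have hFat : HasDerivAt F (g' x * (1 - p) * g x ^ (1 - p - 1)) x :=
        hgat.rpow_const (Or.inl (gpos_ge x hx.le).ne')
      exact ((hFat.add ((hPd x).const_mul (p - 1)))).hasDerivWithinAt
    · intro x hx
      rw [interior_Ici] at hx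
      have hxτ0 : (0:ℝ) ≤ x - τ := by linarith [hx.out]
      have hgτx : 0 ≤ g (x - τ) := gnonneg _ (by linarith [hx.out])
      have hgxpos : 0 < g x := gpos_ge x hx.le
      have hA : g (x - τ) ^ p ≤ g x ^ p :=
        Real.rpow_le_rpow hgτx (gmono (mem_Ici.mpr hxτ0)
          (mem_Ici.mpr (by linarith : (0:ℝ) ≤ x)) (by linarith)) (by linarith)
      have hB : 0 ≤ J x := Jnonneg x
      have hEnn : 0 ≤ g x ^ (1 - p - 1) := Real.rpow_nonneg hgxpos.le _
      have hD : g x ^ p * g x ^ (1 - p - 1) = 1 := by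
        rw [← Real.rpow_add hgxpos]
        norm_num
      rw [idg' x hx.out.le]
      have h2 : (p - 1) * J x * (g x ^ p * g x ^ (1 - p - 1)) = (p - 1) * J x := by
        rw [hD]; ring
      have hkey : 0 ≤ (p - 1) * J x * g x ^ (1 - p - 1) * (g x ^ p - g (x - τ) ^ p) :=
        mul_nonneg (mul_nonneg (mul_nonneg (by linarith : (0:ℝ) ≤ p - 1) hB) hEnn)
          (sub_nonneg.mpr hA)
      nlinarith [hkey, h2]
  -- lower bound on F
  set c : ℝ := (hτv * nu γ τ) ^ (1 - p) - (p - 1) * I with hcdef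
  have hcpos : 0 < c := by rw [hcdef]; linarith
  have hFτ : F τ = (hτv * nu γ τ) ^ (1 - p) := by
    simp only [hFdef]; rw [gτ_eq]
  have hWτ : W τ = F τ := by
    simp only [hWdef, hPdef, intervalIntegral.integral_same, mul_zero, add_zero]
  have Wbound : ∀ t, τ ≤ t → c ≤ F t := by
    intro t ht
    have h1 : W τ ≤ W t := Wmono (mem_Ici.mpr le_rfl) (mem_Ici.mpr ht) ht
    have hPI : P t ≤ I := by
      have hP1 : P t = ∫ ξ in Ioc τ t, J ξ := intervalIntegral.integral_of_le ht
      rw [hP1, hI]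
      exact setIntegral_mono_set hint (Eventually.of_forall Jnonneg)
        (HasSubset.Subset.eventuallyLE (Ioc_subset_Icc_self.trans Icc_subset_Ici_self))
    rw [hWτ, hFτ] at h1
    simp only [hWdef] at h1
    rw [hcdef]
    nlinarith [hPI, h1]
  have hgle : ∀ t, τ ≤ t → g t ≤ c ^ (1 - p)⁻¹ := by
    intro t ht
    have hFt : c ≤ g t ^ (1 - p) := Wbound t ht
    have hinv : (1 - p)⁻¹ ≤ 0 := inv_nonpos.mpr (by linarith)
    have hmono := Real.rpow_le_rpow_of_nonpos hcpos hFt hinv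
    rw [← Real.rpow_mul (gpos_ge t ht).le,
      mul_inv_cancel₀ (by linarith : (1:ℝ) - p ≠ 0), Real.rpow_one] at hmono
    exact hmono
  obtain ⟨M, hMub⟩ := hM
  have hGM : ∀ t, 0 ≤ t → G t ≤ M := fun t ht => hMub ⟨t, ht, rfl⟩
  have hC0 : 0 ≤ c ^ (1 - p)⁻¹ := Real.rpow_nonneg hcpos.le _
  have htail : ∀ t, τ ≤ t → h t ≤ c ^ (1 - p)⁻¹ * Real.exp M := by
    intro t ht
    have hone : nu γ t * Real.exp (G t) = 1 := by
      rw [hνeq, ← Real.exp_add]; simp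
    have hteq : h t = g t * Real.exp (G t) := by
      simp only [hgdef]
      rw [mul_assoc, mul_comm (h t), ← mul_assoc, hone, one_mul]
    rw [hteq]
    exact mul_le_mul (hgle t ht) (Real.exp_le_exp.mpr (hGM t (le_trans hτ.le ht)))
      (Real.exp_pos _).le hC0
  obtain ⟨x0, hx0mem, hx0max⟩ := isCompact_Icc.exists_isMaxOn
    (Set.nonempty_Icc.mpr (by linarith : -τ ≤ τ)) (hhc.mono Icc_subset_Ici_self)
  refine ⟨max (h x0) (c ^ (1 - p)⁻¹ * Real.exp M), ?_⟩
  intro t ht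
  rcases le_total t τ with hle | hge
  · exact le_trans (hx0max (Set.mem_Icc.mpr ⟨ht, hle⟩)) (le_max_left _ _)
  · exact le_trans (htail t hge) (le_max_right _ _)

/-- Corollary 2.8 (Corollary 1), boundedness for the case `f = 0`: if moreover `sup_{t≥0} ∫₀ᵗ γ < ∞`, then `u` is bounded on `[−τ,∞)`. -/
theorem stmt_16
    {H : Type*} [NormedAddCommGroup H] [InnerProductSpace ℂ H]
    (τ p : ℝ) (hτ : 0 < τ) (hp : 1 < p)
    (γ α : ℝ → ℝ)
    (hγc : Continuous γ) (hαc : Continuous α)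
    (hα : ∀ t, 0 ≤ α t)
    (u : ℝ → H) (u' : ℝ → H)
    (huc : ContinuousOn u (Ici (-τ)))
    (hud : ∀ t, 0 ≤ t → HasDerivWithinAt u (u' t) (Ici (0:ℝ)) t)
    (hnd : ∀ t, 0 ≤ t → DifferentiableWithinAt ℝ (fun s => ‖u s‖) (Ici (0:ℝ)) t)
    (huineq : ∀ t, 0 ≤ t → (⟪u t, u' t⟫).re ≤
      γ t * ‖u t‖ ^ 2 + α t * ‖u t‖ * ‖u (t - τ)‖ ^ p)
    (h h' : ℝ → ℝ)
    (hh0 : ∀ t, -τ ≤ t → 0 ≤ h t)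
    (hhc : ContinuousOn h (Ici (-τ)))
    (hhd : ∀ t, 0 ≤ t → HasDerivWithinAt h (h' t) (Ici (0:ℝ)) t)
    (hheq : ∀ t, 0 ≤ t → h' t = γ t * h t + α t * h (t - τ) ^ p)
    (hinit : ∀ t, -τ ≤ t → t ≤ 0 → h t = ‖u t‖)
    (hτv : ℝ)
    (hτvdef : hτv = (‖u 0‖ + ∫ ξ in (0:ℝ)..τ,
        α ξ * nu γ ξ * ‖u (ξ - τ)‖ ^ p) / nu γ τ)
    (hτvpos : 0 < hτv)
    (I : ℝ)
    (hint : IntegrableOn (fun ξ => α ξ * sig γ τ ξ ^ p * nu γ ξ ^ (1 - p)) (Ici τ))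
    (hI : I = ∫ ξ in Ici τ, α ξ * sig γ τ ξ ^ p * nu γ ξ ^ (1 - p))
    (hcond : (p - 1) * I < (hτv * nu γ τ) ^ (1 - p))
    (hM : BddAbove {x : ℝ | ∃ t, 0 ≤ t ∧ x = ∫ ξ in (0:ℝ)..t, γ ξ}) :
    ∃ B : ℝ, ∀ t, -τ ≤ t → ‖u t‖ ≤ B := by
  have hcomp := comparison_aux τ p hτ hp γ α hγc hα u u' huc hud hnd huineq
    h h' hh0 hhc hhd hheq hinit
  have h0eq : ‖u 0‖ = h 0 := (hinit 0 (by linarith) le_rfl).symm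
  have hinteq : (∫ ξ in (0:ℝ)..τ, α ξ * nu γ ξ * ‖u (ξ - τ)‖ ^ p)
      = ∫ ξ in (0:ℝ)..τ, α ξ * nu γ ξ * h (ξ - τ) ^ p := by
    apply intervalIntegral.integral_congr
    intro ξ hξ
    rw [uIcc_of_le hτ.le] at hξ
    show α ξ * nu γ ξ * ‖u (ξ - τ)‖ ^ p = α ξ * nu γ ξ * h (ξ - τ) ^ p
    rw [hinit (ξ - τ) (by linarith [hξ.1]) (by linarith [hξ.2])]
  have hτvdef' : hτv = (h 0 + ∫ ξ in (0:ℝ)..τ,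
      α ξ * nu γ ξ * h (ξ - τ) ^ p) / nu γ τ := by
    rw [hτvdef, h0eq, hinteq]
  obtain ⟨B, hB⟩ := bound_aux τ p hτ hp γ α hγc hαc hα h h' hh0 hhc hhd hheq
    hτv hτvdef' hτvpos I hint hI hcond hM
  exact ⟨B, fun t ht => le_trans (hcomp t ht) (hB t ht)⟩
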